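/- The operator I − S², where S is the unilateral backward shift with S|n+1⟩ = |n⟩, S|0⟩ = 0 on ℓ², is injective but not surjective: the vector v = Σ_{n≥0} (1/(n+1)) |n⟩ ∈ ℓ² is not in the range of I − S². Hence I + I∞_{+,2} contains non-invertible operators. -/

import Mathlib

open Filter Finset

section Aux

variable {H : Type*} [NormedAddCommGroup H] [InnerProductSpace ℝ H] [CompleteSpace H]
  (e : HilbertBasis ℕ ℝ H) (S : H →L[ℝ] H)

/-- ⟨e n, S x⟩ = ⟨e (n+1), x⟩ -/
lemma aux_shift_coord (hS0 : S (e 0) = 0) (hS : ∀ n : ℕ, S (e (n + 1)) = e n)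
    (x : H) (n : ℕ) : (inner ℝ (e n) (S x) : ℝ) = inner ℝ (e (n + 1)) x := by
  have h1 : HasSum (fun i : ℕ => (innerSL ℝ (e n)) (S (e.repr x i • e i)))
      ((innerSL ℝ (e n)) (S x)) := ((e.hasSum_repr x).mapL S).mapL _
  have heq : (fun i : ℕ => (innerSL ℝ (e n)) (S (e.repr x i • e i)))
      = fun i : ℕ => if i = n + 1 then (e.repr x (n + 1) : ℝ) else 0 := by
    funext i
    cases i with
    | zero => simp [hS0]
    | succ k =>
      have horth := orthonormal_iff_ite.mp e.orthonormal n k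
      simp only [map_smul, hS, innerSL_apply_apply, inner_smul_right, smul_eq_mul]
      rw [horth]
      rcases eq_or_ne n k with h | h
      · subst h; simp
      · simp [h, Ne.symm h, fun hh : k + 1 = n + 1 => h (by omega)]
  rw [heq] at h1
  have h2 : HasSum (fun i : ℕ => if i = n + 1 then (e.repr x (n + 1) : ℝ) else 0)
      (e.repr x (n + 1)) := hasSum_ite_eq _ _
  have := h1.unique h2
  simpa [e.repr_apply_apply] using this

/-- coordinates of (1 - S²) x -/
lemma aux_op_coord (hS0 : S (e 0) = 0) (hS : ∀ n : ℕ, S (e (n + 1)) = e n)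
    (x : H) (n : ℕ) :
    (inner ℝ (e n) ((1 - S ^ 2 : H →L[ℝ] H) x) : ℝ)
      = inner ℝ (e n) x - inner ℝ (e (n + 2)) x := by
  have hx : (1 - S ^ 2 : H →L[ℝ] H) x = x - S (S x) := by
    simp [pow_two, ContinuousLinearMap.sub_apply, ContinuousLinearMap.mul_apply]
  rw [hx, inner_sub_right, aux_shift_coord e S hS0 hS,
    aux_shift_coord e S hS0 hS]

/-- coordinates tend to zero -/
lemma aux_coord_tendsto (x : H) :
    Tendsto (fun n : ℕ => (inner ℝ (e n) x : ℝ)) atTop (nhds 0) := by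
  have hmem : Memℓp (fun i : ℕ => (e.repr x i : ℝ)) 2 := (e.repr x).property
  have hsumm : Summable (fun i : ℕ => ‖(e.repr x i : ℝ)‖ ^ (2 : ENNReal).toReal) :=
    hmem.summable (by norm_num)
  have h0 : Tendsto (fun i : ℕ => ‖(e.repr x i : ℝ)‖ ^ (2 : ENNReal).toReal)
      atTop (nhds 0) := hsumm.tendsto_atTop_zero
  have h0' : Tendsto (fun i : ℕ => ‖(e.repr x i : ℝ)‖ ^ (2 : ℕ)) atTop (nhds 0) := by
    convert h0 using 2 with i
    rw [show ((2 : ENNReal).toReal) = ((2 : ℕ) : ℝ) by norm_num, Real.rpow_natCast]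
  have h1 : Tendsto (fun i : ℕ => ‖(e.repr x i : ℝ)‖) atTop (nhds 0) := by
    have h1' := (Real.continuous_sqrt.tendsto 0).comp h0'
    simp only [Function.comp_def, Real.sqrt_zero] at h1'
    simpa [Real.sqrt_sq_eq_abs, Real.norm_eq_abs] using h1'
  have h2 : Tendsto (fun i : ℕ => (e.repr x i : ℝ)) atTop (nhds 0) :=
    tendsto_zero_iff_norm_tendsto_zero.mpr h1
  convert h2 using 2 with n
  rw [e.repr_apply_apply]

end Aux

/-- `I - S²` (with `S` the backward shift, `S|n+1⟩ = |n⟩`, `S|0⟩ = 0`) is injective but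
not surjective: the vector `v` with coordinates `v_n = 1/(n+1)` is not in its range.
Hence `I + I∞_{+,2}` contains non-invertible operators. -/
theorem stmt12
    {H : Type*} [NormedAddCommGroup H] [InnerProductSpace ℝ H] [CompleteSpace H]
    (e : HilbertBasis ℕ ℝ H)
    (S : H →L[ℝ] H) (hS0 : S (e 0) = 0) (hS : ∀ n : ℕ, S (e (n + 1)) = e n)
    (v : H) (hv : ∀ n : ℕ, (inner ℝ (e n) v : ℝ) = 1 / ((n : ℝ) + 1)) :
    Function.Injective ⇑(1 - S ^ 2 : H →L[ℝ] H) ∧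
    ¬ Function.Surjective ⇑(1 - S ^ 2 : H →L[ℝ] H) ∧
    v ∉ Set.range ⇑(1 - S ^ 2 : H →L[ℝ] H) := by
  -- v is not in the range
  have hrange : v ∉ Set.range ⇑(1 - S ^ 2 : H →L[ℝ] H) := by
    rintro ⟨x, hx⟩
    set a : ℕ → ℝ := fun n => inner ℝ (e n) x with ha
    have hrec : ∀ n : ℕ, a n - a (n + 2) = 1 / ((n : ℝ) + 1) := by
      intro n
      rw [← hv n, ← hx, aux_op_coord e S hS0 hS]
    have hsum : ∀ k : ℕ, a 0 = (∑ j ∈ range k, 1 / ((2 * j : ℝ) + 1)) + a (2 * k) := by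
      intro k
      induction k with
      | zero => simp
      | succ m ih =>
        rw [ih, Finset.sum_range_succ, show 2 * (m + 1) = 2 * m + 2 from by ring]
        have := hrec (2 * m)
        push_cast at this ⊢
        linarith
    have htendsA : Tendsto (fun k : ℕ => a (2 * k)) atTop (nhds 0) :=
      (aux_coord_tendsto e x).comp
        (tendsto_atTop_atTop_of_monotone (fun i j h => by omega)
          (fun b => ⟨b, by omega⟩))
    have htendsS : Tendsto (fun k : ℕ => ∑ j ∈ range k, 1 / ((2 * j : ℝ) + 1))
        atTop (nhds (a 0)) := by
      have : (fun k : ℕ => ∑ j ∈ range k, 1 / ((2 * j : ℝ) + 1))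
          = fun k : ℕ => a 0 - a (2 * k) := by
        funext k; have := hsum k; linarith
      rw [this]
      simpa using tendsto_const_nhds.sub htendsA
    have hdiv : Tendsto (fun k : ℕ => ∑ j ∈ range k, 1 / ((2 * j : ℝ) + 1))
        atTop atTop := by
      have hhalf : Tendsto (fun k : ℕ => ∑ j ∈ range k, (1 / 2) * (1 / ((j : ℝ) + 1)))
          atTop atTop := by
        simp only [← Finset.mul_sum]
        exact Real.tendsto_sum_range_one_div_nat_succ_atTop.const_mul_atTop (by norm_num)
      refine tendsto_atTop_mono (fun k => Finset.sum_le_sum fun j _ => ?_) hhalf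
      have hle : (2 * (j : ℝ) + 1) ≤ 2 * ((j : ℝ) + 1) := by linarith
      calc (1:ℝ) / 2 * (1 / ((j : ℝ) + 1)) = 1 / (2 * ((j : ℝ) + 1)) := by rw [one_div, one_div, one_div, mul_inv]
        _ ≤ 1 / (2 * (j : ℝ) + 1) :=
          one_div_le_one_div_of_le (by positivity) hle
    exact not_tendsto_atTop_of_tendsto_nhds htendsS hdiv
  refine ⟨?_, fun hsurj => hrange (hsurj v), hrange⟩
  -- injectivity
  intro x y hxy
  have hker : ∀ z : H, (1 - S ^ 2 : H →L[ℝ] H) z = 0 → z = 0 := by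
    intro z hz
    set a : ℕ → ℝ := fun n => inner ℝ (e n) z with ha
    have hrec : ∀ n : ℕ, a n = a (n + 2) := by
      intro n
      have := aux_op_coord e S hS0 hS z n
      rw [hz, inner_zero_right] at this
      linarith
    have hstep : ∀ n k : ℕ, a n = a (n + 2 * k) := by
      intro n k
      induction k with
      | zero => simp
      | succ m ih => rw [ih, show n + 2 * (m + 1) = (n + 2 * m) + 2 by ring, ← hrec]
    have hzero : ∀ n, a n = 0 := by
      intro n
      have h1 : Tendsto (fun k : ℕ => a (n + 2 * k)) atTop (nhds 0) :=
        (aux_coord_tendsto e z).comp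
          (tendsto_atTop_atTop_of_monotone (fun i j h => by omega)
            (fun b => ⟨b, by omega⟩))
      have h2 : (fun k : ℕ => a (n + 2 * k)) = fun _ => a n := by
        funext k; exact (hstep n k).symm
      rw [h2] at h1
      exact (tendsto_nhds_unique tendsto_const_nhds h1)
    have : e.repr z = 0 := by
      ext n
      rw [e.repr_apply_apply]
      simpa using hzero n
    have := congrArg e.repr.symm this
    simpa using this
  have : (1 - S ^ 2 : H →L[ℝ] H) (x - y) = 0 := by
    rw [map_sub, hxy, sub_self]
  exact sub_eq_zero.mp (hker _ this)
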